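/- Fix a strategy S of the clever player, m ≤ C(n,2), and a realizable play-sequence Γ = (Γ_1,…,Γ_m) with clever-move positions C and random-move positions R partitioning [m]. The number of permutations σ of E(K_n) such that the random player playing the permutation strategy σ against S produces play-sequence Γ equals (C(n,2) − m)! · ∏_{j ∈ C} (C(n,2) − j + 1). -/

import Mathlib

open Equiv Function

namespace Stmt8Aux

variable {N m : ℕ}

/-- The condition on the sequence of positions `v` of the played edges: at each random
position `i`, the value `v i` is smaller than everything except earlier values. -/
def Q (R : Finset (Fin m)) (v : Fin m → Fin N) : Prop :=
  ∀ i ∈ R, ∀ y : Fin N, (∀ j ≤ i, v j ≠ y) → v i < y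

lemma card_sigma_const {α : Type*} [Finite α] {f : α → Type*} [∀ a, Finite (f a)] {c : ℕ}
    (h : ∀ a, Nat.card (f a) = c) : Nat.card (Sigma f) = Nat.card α * c := by
  classical
  cases nonempty_fintype α
  letI : ∀ a, Fintype (f a) := fun a => Fintype.ofFinite _
  simp only [Nat.card_eq_fintype_card] at h ⊢
  rw [Fintype.card_sigma]
  rw [Finset.sum_congr rfl (fun a _ => h a), Finset.sum_const, smul_eq_mul, Finset.card_univ]

lemma q_snoc_iff (R : Finset (Fin (m+1))) (v' : Fin m → Fin N) (y : Fin N) :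
    Q R (Fin.snoc v' y) ↔
      Q (Finset.univ.filter fun i : Fin m => i.castSucc ∈ R) v' ∧
        (Fin.last m ∈ R → ∀ y' : Fin N, (∀ j, v' j ≠ y') → y' ≠ y → y < y') := by
  constructor
  · intro hQ
    refine ⟨?_, ?_⟩
    · intro i hi y₀ hy₀
      have hi' : i.castSucc ∈ R := (Finset.mem_filter.mp hi).2
      have h := hQ i.castSucc hi' y₀ ?_
      · simpa using h
      · intro j hj
        have hjlast : j ≠ Fin.last m := by
          intro h; subst h
          exact absurd hj (by simpa using (Fin.castSucc_lt_last i).not_le)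
        obtain ⟨j', rfl⟩ := Fin.exists_castSucc_eq.mpr hjlast
        rw [Fin.snoc_castSucc]
        exact hy₀ j' (by simpa using hj)
    · intro hlast y' hy' hne
      have h := hQ (Fin.last m) hlast y' ?_
      · simpa using h
      · intro j _
        rcases Fin.eq_castSucc_or_eq_last j with ⟨j', rfl⟩ | rfl
        · rw [Fin.snoc_castSucc]; exact hy' j'
        · rw [Fin.snoc_last]; exact fun h => hne h.symm
  · rintro ⟨h1, h2⟩ i hi y₀ hy₀
    rcases Fin.eq_castSucc_or_eq_last i with ⟨i', rfl⟩ | rfl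
    · have h : v' i' < y₀ := by
        apply h1 i' (Finset.mem_filter.mpr ⟨Finset.mem_univ _, hi⟩) y₀
        intro j hj
        have := hy₀ j.castSucc (Fin.castSucc_le_castSucc_iff.mpr hj)
        simpa using this
      simpa using h
    · have hy : (∀ j, v' j ≠ y₀) := fun j => by
        have := hy₀ j.castSucc (le_of_lt (Fin.castSucc_lt_last j))
        simpa using this
      have hne : y₀ ≠ y := by
        have := hy₀ (Fin.last m) le_rfl
        rw [Fin.snoc_last] at this
        exact fun h => this h.symm
      have := h2 hi y₀ hy hne
      simpa using this

lemma snoc_inj {v' : Fin m ↪ Fin N} {y : Fin N} (hy : ∀ j, v' j ≠ y) :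
    Function.Injective (Fin.snoc (v' : Fin m → Fin N) y : Fin (m+1) → Fin N) := by
  intro a b hab
  rcases Fin.eq_castSucc_or_eq_last a with ⟨a', rfl⟩ | rfl <;>
    rcases Fin.eq_castSucc_or_eq_last b with ⟨b', rfl⟩ | rfl <;>
      simp only [Fin.snoc_castSucc, Fin.snoc_last] at hab
  · exact congrArg Fin.castSucc (v'.injective hab)
  · exact absurd hab (hy a')
  · exact absurd hab.symm (hy b')
  · rfl

/-- Condition on the last value `y` appended to `v'`. -/
def Cond (R : Finset (Fin (m+1))) (v' : Fin m ↪ Fin N) (y : Fin N) : Prop :=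
  (∀ j, v' j ≠ y) ∧ (Fin.last m ∈ R → ∀ y' : Fin N, (∀ j, v' j ≠ y') → y' ≠ y → y < y')

lemma coe_snoc_eq (v : Fin (m+1) ↪ Fin N) :
    (v : Fin (m+1) → Fin N)
      = Fin.snoc (fun j : Fin m => v j.castSucc) (v (Fin.last m)) := by
  funext i
  rcases Fin.eq_castSucc_or_eq_last i with ⟨i', rfl⟩ | rfl
  · rw [Fin.snoc_castSucc]
  · rw [Fin.snoc_last]

lemma q_parts (R : Finset (Fin (m+1))) (v : Fin (m+1) ↪ Fin N) (hv : Q R ⇑v) :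
    Q (Finset.univ.filter fun i : Fin m => i.castSucc ∈ R) (fun j : Fin m => v j.castSucc) ∧
      (Fin.last m ∈ R → ∀ y' : Fin N, (∀ j : Fin m, v j.castSucc ≠ y') →
        y' ≠ v (Fin.last m) → v (Fin.last m) < y') := by
  refine (q_snoc_iff R _ _).mp ?_
  rw [← coe_snoc_eq]
  exact hv

lemma sigma_helper {A B : Type*} {P : A → Prop} {C : A → B → Prop}
    {a a' : A} {ha : P a} {ha' : P a'} {y y' : B} {hy : C a y} {hy' : C a' y'}
    (h1 : a = a') (h2 : y = y') :
    (⟨⟨a, ha⟩, ⟨y, hy⟩⟩ : Σ x : {x // P x}, {z // C x.1 z}) = ⟨⟨a', ha'⟩, ⟨y', hy'⟩⟩ := by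
  cases h1; cases h2; rfl

noncomputable def snocInv (R : Finset (Fin (m+1))) (v : {v : Fin (m+1) ↪ Fin N // Q R v}) :
    Σ v' : {v' : Fin m ↪ Fin N //
        Q (Finset.univ.filter fun i : Fin m => i.castSucc ∈ R) v'},
      {y : Fin N // Cond R v'.1 y} :=
  ⟨⟨⟨fun j : Fin m => v.1 j.castSucc,
      fun a b h => Fin.castSucc_injective m (v.1.injective h)⟩,
    (q_parts R v.1 v.2).1⟩,
   ⟨v.1 (Fin.last m),
    ⟨fun j h => absurd (v.1.injective h) (Fin.ne_last_of_lt (Fin.castSucc_lt_last j)),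
     (q_parts R v.1 v.2).2⟩⟩⟩

noncomputable def snocFun (R : Finset (Fin (m+1)))
    (p : Σ v' : {v' : Fin m ↪ Fin N //
        Q (Finset.univ.filter fun i : Fin m => i.castSucc ∈ R) v'},
      {y : Fin N // Cond R v'.1 y}) : {v : Fin (m+1) ↪ Fin N // Q R v} :=
  ⟨⟨Fin.snoc (p.1.1 : Fin m → Fin N) p.2.1, snoc_inj p.2.2.1⟩,
    (q_snoc_iff R _ _).mpr ⟨p.1.2, p.2.2.2⟩⟩

lemma snocFun_bijective (R : Finset (Fin (m+1))) : Function.Bijective (snocFun (N := N) R) := by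
  constructor
  · rintro ⟨⟨v', hv'⟩, ⟨y, hy⟩⟩ ⟨⟨w', hw'⟩, ⟨z, hz⟩⟩ h
    have hfun := congrArg (fun t => ((t : {v : Fin (m+1) ↪ Fin N // Q R v}).1
      : Fin (m+1) → Fin N)) h
    have h1 : ∀ j : Fin m, v' j = w' j := fun j => by
      have := congrFun hfun j.castSucc
      simpa [snocFun] using this
    have h2 : y = z := by
      have := congrFun hfun (Fin.last m)
      simpa [snocFun] using this
    exact sigma_helper (Function.Embedding.ext h1) h2
  · intro v
    refine ⟨snocInv R v, ?_⟩
    apply Subtype.ext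
    apply Function.Embedding.ext
    intro i
    exact congrFun (coe_snoc_eq v.1).symm i

lemma card_cond (R : Finset (Fin (m+1))) (hm : m + 1 ≤ N)
    (v' : {v' : Fin m ↪ Fin N //
        Q (Finset.univ.filter fun i : Fin m => i.castSucc ∈ R) v'}) :
    Nat.card {y : Fin N // Cond R v'.1 y} = if Fin.last m ∈ R then 1 else N - m := by
  classical
  by_cases hlast : Fin.last m ∈ R
  · rw [if_pos hlast]
    rw [Nat.card_eq_one_iff_unique]
    constructor
    · constructor
      rintro ⟨y₁, h₁⟩ ⟨y₂, h₂⟩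
      apply Subtype.ext
      by_contra hne
      exact absurd (h₂.2 hlast y₁ h₁.1 hne) (lt_asymm (h₁.2 hlast y₂ h₂.1 (Ne.symm hne)))
    · set t : Finset (Fin N) := Finset.univ.filter (fun y => ∀ j, v'.1 j ≠ y) with ht
      have htne : t.Nonempty := by
        by_contra hem
        rw [Finset.not_nonempty_iff_eq_empty] at hem
        have hsurj : Function.Surjective (v'.1 : Fin m → Fin N) := by
          intro y
          by_contra hy
          push_neg at hy
          have : y ∈ t := by
            rw [ht, Finset.mem_filter]
            exact ⟨Finset.mem_univ _, fun j h => hy j h⟩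
          rw [hem] at this
          exact absurd this (Finset.notMem_empty y)
        have := Fintype.card_le_of_surjective _ hsurj
        simp only [Fintype.card_fin] at this
        omega
      refine ⟨⟨t.min' htne, ?_, ?_⟩⟩
      · exact (Finset.mem_filter.mp (t.min'_mem htne)).2
      · intro _ y' hy' hne
        exact lt_of_le_of_ne
          (t.min'_le y' (Finset.mem_filter.mpr ⟨Finset.mem_univ _, hy'⟩)) hne.symm
  · rw [if_neg hlast]
    have e : {y : Fin N // Cond R v'.1 y} ≃ {y : Fin N // ∀ j, v'.1 j ≠ y} :=
      Equiv.subtypeEquivRight fun y => and_iff_left (fun h => (hlast h).elim)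
    rw [Nat.card_congr e, Nat.card_eq_fintype_card, Fintype.card_subtype]
    have hf : Finset.univ.filter (fun y : Fin N => ∀ j, v'.1 j ≠ y)
        = Finset.univ \ Finset.univ.image (v'.1 : Fin m → Fin N) := by
      ext y
      simp [eq_comm]
    rw [hf, Finset.card_sdiff_of_subset (Finset.subset_univ _), Finset.card_univ, Fintype.card_fin,
      Finset.card_image_of_injective _ v'.1.injective, Finset.card_univ, Fintype.card_fin]

lemma card_emb (N : ℕ) : ∀ m : ℕ, m ≤ N → ∀ R : Finset (Fin m),
    Nat.card {v : Fin m ↪ Fin N // Q R v} = ∏ j ∈ Rᶜ, (N - (j : ℕ))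
  | 0, _, R => by
    have h0 : Rᶜ = (∅ : Finset (Fin 0)) := Finset.eq_empty_of_isEmpty _
    rw [h0, Finset.prod_empty]
    haveI : Nonempty {v : Fin 0 ↪ Fin N // Q R v} :=
      ⟨⟨⟨Fin.elim0, fun a => a.elim0⟩, fun i => i.elim0⟩⟩
    haveI : Subsingleton {v : Fin 0 ↪ Fin N // Q R v} :=
      ⟨fun a b => Subtype.ext (Function.Embedding.ext fun j => j.elim0)⟩
    exact Nat.card_unique
  | (m+1), hm, R => by
    classical
    have hmN : m ≤ N := le_trans (Nat.le_succ m) hm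
    have hcongr := Nat.card_eq_of_bijective _ (snocFun_bijective (N := N) R)
    rw [← hcongr, card_sigma_const (card_cond R hm),
      card_emb N m hmN (Finset.univ.filter fun i : Fin m => i.castSucc ∈ R)]
    -- now prove the product identity
    have h1 : (Rᶜ : Finset (Fin (m+1))) = Finset.univ.filter (fun j => j ∉ R) := by
      ext j; simp
    rw [h1, Finset.prod_filter, Fin.prod_univ_castSucc]
    have h2 : ((Finset.univ.filter fun i : Fin m => i.castSucc ∈ R)ᶜ : Finset (Fin m))
        = Finset.univ.filter (fun j : Fin m => ¬ j.castSucc ∈ R) := by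
      ext j; simp
    rw [h2, Finset.prod_filter]
    have h3 : ∀ j : Fin m,
        (if j.castSucc ∉ R then (N - ((j.castSucc : Fin (m+1)) : ℕ)) else 1)
          = (if ¬ j.castSucc ∈ R then (N - (j : ℕ)) else 1) := by
      intro j
      simp only [Fin.coe_castSucc]
    rw [Finset.prod_congr rfl (fun j _ => h3 j)]
    by_cases hlast : Fin.last m ∈ R <;> simp [hlast, Fin.val_last]

noncomputable def complEquiv (b v : Fin m ↪ Fin N) :
    ((Set.range (b : Fin m → Fin N))ᶜ : Set (Fin N)) ≃
      ((Set.range (v : Fin m → Fin N))ᶜ : Set (Fin N)) := by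
  classical
  refine Fintype.equivOfCardEq ?_
  rw [Fintype.card_compl_set, Fintype.card_compl_set,
    Set.card_range_of_injective b.injective, Set.card_range_of_injective v.injective]

/-- A permutation of `Fin N` extending the partial injection `b ↦ v`. -/
noncomputable def extPerm (b v : Fin m ↪ Fin N) : Equiv.Perm (Fin N) := by
  classical
  exact ((Equiv.Set.sumCompl (Set.range (b : Fin m → Fin N))).symm.trans
    (Equiv.sumCongr
      ((Equiv.ofInjective _ b.injective).symm.trans (Equiv.ofInjective _ v.injective))
      (complEquiv b v))).trans (Equiv.Set.sumCompl (Set.range (v : Fin m → Fin N)))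

lemma extPerm_apply (b v : Fin m ↪ Fin N) (j : Fin m) : extPerm b v (b j) = v j := by
  classical
  have hmem : (b j : Fin N) ∈ Set.range (b : Fin m → Fin N) := Set.mem_range_self j
  simp only [extPerm, Equiv.trans_apply]
  rw [Equiv.Set.sumCompl_symm_apply_of_mem hmem]
  simp only [Equiv.sumCongr_apply, Sum.map_inl, Equiv.trans_apply]
  have h2 : (Equiv.ofInjective (b : Fin m → Fin N) b.injective).symm ⟨b j, hmem⟩ = j := by
    apply b.injective
    exact Equiv.apply_ofInjective_symm b.injective ⟨b j, hmem⟩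
  rw [h2]
  rw [Equiv.ofInjective_apply, Equiv.Set.sumCompl_apply_inl]

/-- Composition of a permutation with a fixed embedding, as an embedding. -/
def cEmb (b : Fin m ↪ Fin N) (τ : Equiv.Perm (Fin N)) : Fin m ↪ Fin N :=
  b.trans τ.toEmbedding

noncomputable def permEquiv (b : Fin m ↪ Fin N) (P : (Fin m → Fin N) → Prop) :
    {τ : Equiv.Perm (Fin N) // P (fun j => τ (b j))} ≃
      {v : Fin m ↪ Fin N // P v} ×
        {π : Equiv.Perm (Fin N) // ∀ j, π (b j) = b j} where
  toFun τ :=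
    (⟨cEmb b τ.1, τ.2⟩,
     ⟨(extPerm b (cEmb b τ.1))⁻¹ * τ.1, fun j => by
        show (extPerm b (cEmb b τ.1))⁻¹ (τ.1 (b j)) = b j
        rw [show τ.1 (b j) = extPerm b (cEmb b τ.1) (b j) from
          (extPerm_apply b (cEmb b τ.1) j).symm]
        exact Equiv.symm_apply_apply _ _⟩)
  invFun p :=
    ⟨extPerm b p.1.1 * p.2.1, by
      have hfun : (fun j => (extPerm b p.1.1 * p.2.1) (b j)) = (p.1.1 : Fin m → Fin N) := by
        funext j
        show extPerm b p.1.1 (p.2.1 (b j)) = p.1.1 j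
        rw [p.2.2 j, extPerm_apply]
      rw [hfun]
      exact p.1.2⟩
  left_inv τ := by
    apply Subtype.ext
    show extPerm b (cEmb b τ.1) * ((extPerm b (cEmb b τ.1))⁻¹ * τ.1) = τ.1
    exact mul_inv_cancel_left _ _
  right_inv p := by
    obtain ⟨⟨v, hv⟩, ⟨π, hπ⟩⟩ := p
    have hemb : cEmb b (extPerm b v * π) = v := by
      apply Function.Embedding.ext
      intro j
      show extPerm b v (π (b j)) = v j
      rw [hπ j, extPerm_apply]
    refine Prod.ext ?_ ?_
    · exact Subtype.ext hemb
    · apply Subtype.ext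
      show (extPerm b (cEmb b (extPerm b v * π)))⁻¹ * (extPerm b v * π) = π
      rw [hemb]
      exact inv_mul_cancel_left _ _

lemma card_fix (b : Fin m ↪ Fin N) :
    Nat.card {π : Equiv.Perm (Fin N) // ∀ j, π (b j) = b j} = (N - m).factorial := by
  classical
  have e1 := Equiv.Perm.subtypeEquivSubtypePerm
    (p := fun a : Fin N => a ∉ Set.range (b : Fin m → Fin N))
  have e2 : {f : Equiv.Perm (Fin N) //
        ∀ a, ¬ a ∉ Set.range (b : Fin m → Fin N) → f a = a}
      ≃ {π : Equiv.Perm (Fin N) // ∀ j, π (b j) = b j} :=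
    Equiv.subtypeEquivRight fun f =>
      ⟨fun h j => h (b j) (not_not_intro ⟨j, rfl⟩), fun h a ha => by
        obtain ⟨j, rfl⟩ := not_not.mp ha
        exact h j⟩
  rw [← Nat.card_congr (e1.trans e2), Nat.card_eq_fintype_card, Fintype.card_perm]
  congr 1
  rw [Fintype.card_subtype]
  have hf : Finset.univ.filter (fun a : Fin N => a ∉ Set.range (b : Fin m → Fin N))
      = Finset.univ \ Finset.univ.image (b : Fin m → Fin N) := by
    ext a
    simp [Set.mem_range, eq_comm]
  rw [hf, Finset.card_sdiff_of_subset (Finset.subset_univ _), Finset.card_univ, Fintype.card_fin,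
    Finset.card_image_of_injective _ b.injective, Finset.card_univ, Fintype.card_fin]

lemma card_perm (b : Fin m ↪ Fin N) (P : (Fin m → Fin N) → Prop) :
    Nat.card {τ : Equiv.Perm (Fin N) // P (fun j => τ (b j))} =
      Nat.card {v : Fin m ↪ Fin N // P v} * (N - m).factorial := by
  rw [Nat.card_congr (permEquiv b P), Nat.card_prod, card_fix b]

end Stmt8Aux

/-- fix `m ≤ C(n,2)`, a play-sequence `Γ` of distinct edges of `K_n`, with
random-move positions `R` and clever-move positions `Rᶜ`. The number of orderings (permutations)
`σ` of the edge set of `K_n` (identified with `Fin (C(n,2))` via a bijection `enum`; the edge at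
position `t` of the ordering is `enum.symm (σ t)`, so edge `e` has position `σ.symm (enum e)`)
which produce the play-sequence `Γ` when the random player follows the permutation strategy
`σ` — characterized by: (1) the edges at positions in `R` appear in `σ` in the same relative
order as in `Γ`; (2) the edges at positions in `R` precede all edges not occurring in `Γ`;
(3) for every clever position `j`, the edge `Γ j` comes after all edges `Γ i` with `i ∈ R`,
`i < j` — equals `(C(n,2) - m)! · ∏_{j ∈ Rᶜ} (C(n,2) - j)` (positions `0`-indexed). -/
theorem stmt_8 (n m : ℕ) (hm : m ≤ n.choose 2)
    (enum : {e : Sym2 (Fin n) // ¬ e.IsDiag} ≃ Fin (n.choose 2))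
    (R : Finset (Fin m))
    (Γ : Fin m → {e : Sym2 (Fin n) // ¬ e.IsDiag})
    (hΓ : Function.Injective Γ) :
    Nat.card {σ : Equiv.Perm (Fin (n.choose 2)) //
        (∀ i ∈ R, ∀ i' ∈ R, i < i' → σ.symm (enum (Γ i)) < σ.symm (enum (Γ i'))) ∧
        (∀ i ∈ R, ∀ e : {e : Sym2 (Fin n) // ¬ e.IsDiag}, (∀ j : Fin m, Γ j ≠ e) →
          σ.symm (enum (Γ i)) < σ.symm (enum e)) ∧
        (∀ j : Fin m, j ∉ R → ∀ i ∈ R, i < j →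
          σ.symm (enum (Γ i)) < σ.symm (enum (Γ j)))} =
      (n.choose 2 - m).factorial * ∏ j ∈ Rᶜ, (n.choose 2 - (j : ℕ)) := by
  classical
  let b : Fin m ↪ Fin (n.choose 2) := ⟨fun j => enum (Γ j), fun a c h => hΓ (enum.injective h)⟩
  have hiff : ∀ σ : Equiv.Perm (Fin (n.choose 2)),
      ((∀ i ∈ R, ∀ i' ∈ R, i < i' → σ.symm (enum (Γ i)) < σ.symm (enum (Γ i'))) ∧
        (∀ i ∈ R, ∀ e : {e : Sym2 (Fin n) // ¬ e.IsDiag}, (∀ j : Fin m, Γ j ≠ e) →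
          σ.symm (enum (Γ i)) < σ.symm (enum e)) ∧
        (∀ j : Fin m, j ∉ R → ∀ i ∈ R, i < j →
          σ.symm (enum (Γ i)) < σ.symm (enum (Γ j)))) ↔
      Stmt8Aux.Q R (fun j => σ.symm (b j)) := by
    intro σ
    constructor
    · rintro ⟨h1, h2, h3⟩ i hi y hy
      by_cases hx : ∃ j : Fin m, enum (Γ j) = σ y
      · obtain ⟨j, hj⟩ := hx
        have hyj : σ.symm (enum (Γ j)) = y := by rw [hj, Equiv.symm_apply_apply]
        have hij : i < j := by
          by_contra hle
          push_neg at hle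
          exact hy j hle hyj
        by_cases hjR : j ∈ R
        · have := h1 i hi j hjR hij; rwa [hyj] at this
        · have := h3 j hjR i hi hij; rwa [hyj] at this
      · push_neg at hx
        have hne : ∀ j : Fin m, Γ j ≠ enum.symm (σ y) := by
          intro j h
          exact hx j (by rw [h, Equiv.apply_symm_apply])
        have := h2 i hi (enum.symm (σ y)) hne
        rwa [Equiv.apply_symm_apply, Equiv.symm_apply_apply] at this
    · intro hQ
      refine ⟨?_, ?_, ?_⟩
      · intro i hi i' hi' hlt
        apply hQ i hi
        intro j hj heq
        exact absurd (hΓ (enum.injective (σ.symm.injective heq)))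
          (lt_of_le_of_lt hj hlt).ne
      · intro i hi e he
        apply hQ i hi
        intro j hj heq
        exact he j (enum.injective (σ.symm.injective heq))
      · intro j hjR i hi hij
        apply hQ i hi
        intro j' hj' heq
        exact absurd (hΓ (enum.injective (σ.symm.injective heq)))
          (lt_of_le_of_lt hj' hij).ne
  have E : {σ : Equiv.Perm (Fin (n.choose 2)) //
        (∀ i ∈ R, ∀ i' ∈ R, i < i' → σ.symm (enum (Γ i)) < σ.symm (enum (Γ i'))) ∧
        (∀ i ∈ R, ∀ e : {e : Sym2 (Fin n) // ¬ e.IsDiag}, (∀ j : Fin m, Γ j ≠ e) →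
          σ.symm (enum (Γ i)) < σ.symm (enum e)) ∧
        (∀ j : Fin m, j ∉ R → ∀ i ∈ R, i < j →
          σ.symm (enum (Γ i)) < σ.symm (enum (Γ j)))} ≃
      {τ : Equiv.Perm (Fin (n.choose 2)) // Stmt8Aux.Q R (fun j => τ (b j))} :=
    { toFun := fun σ => ⟨σ.1.symm, (hiff σ.1).mp σ.2⟩
      invFun := fun τ => ⟨τ.1.symm, (hiff τ.1.symm).mpr (by
        rw [Equiv.symm_symm]
        exact τ.2)⟩
      left_inv := fun σ => Subtype.ext (Equiv.symm_symm _)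
      right_inv := fun τ => Subtype.ext (Equiv.symm_symm _) }
  rw [Nat.card_congr E, Stmt8Aux.card_perm b (Stmt8Aux.Q R),
    Stmt8Aux.card_emb (n.choose 2) m hm R, mul_comm]
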